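/- arXiv:math/0606216 — 5 statements merged into one kernel-verified Lean document; each statement's English description precedes it below -/
import Mathlib

section
/- Assume G₁ is a normal subgroup of G₂, the centralizer of G₁ in G₂ is trivial (C_{G₂}(G₁) = {e}), A ⊆ G₁, and (G₁, A) is a special pair. Then (G₂, A) is a special pair. -/
universe u

section SpecialPair

variable {G : Type u} [Group G]

/-- There is a group isomorphism from `⟨A ∪ {x}⟩` onto `⟨A ∪ {y}⟩` fixing `A`
pointwise and sending `x` to `y`. -/
def FixesAndSends (A : Set G) (x y : G) : Prop :=
  ∃ φ : ↥(Subgroup.closure (A ∪ {x})) ≃* ↥(Subgroup.closure (A ∪ {y})),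
    (∀ g : ↥(Subgroup.closure (A ∪ {x})), (g : G) ∈ A → ((φ g : G) = (g : G))) ∧
    (∀ g : ↥(Subgroup.closure (A ∪ {x})), (g : G) = x → ((φ g : G) = y))

end SpecialPair

/-- `(G, A)` is a special pair: whenever there is an isomorphism from `⟨A ∪ {x}⟩`
onto `⟨A ∪ {y}⟩` fixing `A` pointwise and sending `x` to `y`, then `x = y`. -/
def IsSpecialPair (G : Type u) [Group G] (A : Set G) : Prop :=
  ∀ x y : G, FixesAndSends A x y → x = y

section Helpers

lemma exists_mulEquiv_of_closure_hom {G G' : Type*} [Group G] [Group G']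
    {S : Set G} {T : Set G'} (Ψ : ↥(Subgroup.closure S) →* G')
    (hinj : Function.Injective Ψ)
    (himg : Ψ '' ((↑) ⁻¹' S) = T) :
    ∃ e : ↥(Subgroup.closure S) ≃* ↥(Subgroup.closure T), ∀ g, ((e g : G')) = Ψ g := by
  have h1 : Ψ.range = Subgroup.closure T := by
    rw [MonoidHom.range_eq_map, ← Subgroup.closure_closure_coe_preimage (k := S),
      MonoidHom.map_closure, himg]
  exact ⟨(MonoidHom.ofInjective hinj).trans (MulEquiv.subgroupCongr h1), fun g => rfl⟩

variable {G : Type u} [Group G]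

/-- A global automorphism fixing `A` pointwise yields `FixesAndSends A u (f u)`. -/
lemma fixesAndSends_of_equiv {A : Set G} (f : G ≃* G)
    (hfA : ∀ a ∈ A, f a = a) (u : G) : FixesAndSends A u (f u) := by
  set S : Set G := A ∪ {u} with hS
  set Ψ : ↥(Subgroup.closure S) →* G := f.toMonoidHom.comp (Subgroup.closure S).subtype with hΨ
  have hinj : Function.Injective Ψ := f.injective.comp (Subgroup.subtype_injective _)
  have himg : Ψ '' ((↑) ⁻¹' S) = A ∪ {f u} := by
    ext b
    constructor
    · rintro ⟨g, hg, rfl⟩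
      rcases hg with ha | h1
      · refine Or.inl ?_
        show f (g : G) ∈ A
        rw [hfA _ ha]; exact ha
      · refine Or.inr ?_
        have : (g : G) = u := h1
        simp [hΨ, this]
    · rintro (hb | hb)
      · exact ⟨⟨b, Subgroup.subset_closure (Or.inl hb)⟩, Or.inl hb, hfA b hb⟩
      · exact ⟨⟨u, Subgroup.subset_closure (Or.inr rfl)⟩, Or.inr rfl, hb ▸ rfl⟩
  obtain ⟨e, he⟩ := exists_mulEquiv_of_closure_hom Ψ hinj himg
  refine ⟨e, fun g hg => ?_, fun g hg => ?_⟩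
  · rw [he]; exact hfA _ hg
  · rw [he]; show f (g : G) = f u; rw [hg]

/-- Restriction: an isomorphism witnessing `FixesAndSends A x y` also witnesses
`FixesAndSends A u (φ u)` for any `u` in its domain. -/
lemma fixesAndSends_restrict {A : Set G} {x y u : G}
    (φ : ↥(Subgroup.closure (A ∪ {x})) ≃* ↥(Subgroup.closure (A ∪ {y})))
    (hfix : ∀ g : ↥(Subgroup.closure (A ∪ {x})), (g : G) ∈ A → ((φ g : G) = (g : G)))
    (hu : u ∈ Subgroup.closure (A ∪ {x})) :
    FixesAndSends A u ((φ ⟨u, hu⟩ : ↥(Subgroup.closure (A ∪ {y}))) : G) := by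
  set v : G := ((φ ⟨u, hu⟩ : ↥(Subgroup.closure (A ∪ {y}))) : G) with hv
  have hle : Subgroup.closure (A ∪ {u}) ≤ Subgroup.closure (A ∪ {x}) := by
    rw [Subgroup.closure_le]
    rintro g (hg | hg)
    · exact Subgroup.subset_closure (Or.inl hg)
    · rw [Set.mem_singleton_iff] at hg; exact hg ▸ hu
  set Ψ : ↥(Subgroup.closure (A ∪ {u})) →* G :=
    (Subgroup.closure (A ∪ {y})).subtype.comp
      (φ.toMonoidHom.comp (Subgroup.inclusion hle)) with hΨ
  have hcoeΨ : ∀ g : ↥(Subgroup.closure (A ∪ {u})),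
      Ψ g = ((φ (Subgroup.inclusion hle g) : ↥(Subgroup.closure (A ∪ {y}))) : G) := fun g => rfl
  have hinj : Function.Injective Ψ :=
    (Subgroup.subtype_injective _).comp (φ.injective.comp (Subgroup.inclusion_injective hle))
  have hincl : ∀ (g : ↥(Subgroup.closure (A ∪ {u}))),
      ((Subgroup.inclusion hle g : ↥(Subgroup.closure (A ∪ {x}))) : G) = (g : G) := fun g => rfl
  have himg : Ψ '' ((↑) ⁻¹' (A ∪ {u})) = A ∪ {v} := by
    ext b
    constructor
    · rintro ⟨g, hg, rfl⟩
      rcases hg with ha | h1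
      · refine Or.inl ?_
        rw [hcoeΨ, hfix _ (by rw [hincl]; exact ha), hincl]
        exact ha
      · refine Or.inr ?_
        have h2 : (g : G) = u := h1
        have h3 : Subgroup.inclusion hle g = ⟨u, hu⟩ := by
          apply Subtype.ext; rw [hincl]; exact h2
        rw [Set.mem_singleton_iff, hcoeΨ, h3]
    · rintro (hb | hb)
      · refine ⟨⟨b, Subgroup.subset_closure (Or.inl hb)⟩, Or.inl hb, ?_⟩
        rw [hcoeΨ, hfix _ (by rw [hincl]; exact hb), hincl]
      · refine ⟨⟨u, Subgroup.subset_closure (Or.inr rfl)⟩, Or.inr rfl, ?_⟩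
        have h3 : Subgroup.inclusion hle (⟨u, Subgroup.subset_closure (Or.inr rfl)⟩ :
            ↥(Subgroup.closure (A ∪ {u}))) = ⟨u, hu⟩ := by
          apply Subtype.ext; rw [hincl]
        rw [hcoeΨ, h3, hb]
  obtain ⟨e, he⟩ := exists_mulEquiv_of_closure_hom Ψ hinj himg
  refine ⟨e, fun g hg => ?_, fun g hg => ?_⟩
  · rw [he, hcoeΨ, hfix _ (by rw [hincl]; exact hg), hincl]
  · have h3 : Subgroup.inclusion hle g = ⟨u, hu⟩ := by
      apply Subtype.ext; rw [hincl]; exact hg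
    rw [he, hcoeΨ, h3]

/-- Transfer a `FixesAndSends` witness from the ambient group into a subgroup
containing `A` and the two elements. -/
lemma fixesAndSends_subtype {N : Subgroup G} {A : Set G} (hA : A ⊆ (N : Set G)) (u v : ↥N)
    (h : FixesAndSends A (u : G) (v : G)) :
    FixesAndSends {a : ↥N | (a : G) ∈ A} u v := by
  obtain ⟨φ, hfix, hsend⟩ := h
  set A' : Set ↥N := {a : ↥N | (a : G) ∈ A} with hA'
  have hle : ∀ g : ↥N, g ∈ Subgroup.closure (A' ∪ {u}) →
      (g : G) ∈ Subgroup.closure (A ∪ {(u : G)}) := by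
    intro g hg
    have hsub : Subgroup.closure (A' ∪ {u}) ≤
        (Subgroup.closure (A ∪ {(u : G)})).comap N.subtype := by
      rw [Subgroup.closure_le]
      rintro a (ha | ha)
      · exact Subgroup.subset_closure (Or.inl ha)
      · rw [Set.mem_singleton_iff] at ha; subst ha
        exact Subgroup.subset_closure (Or.inr rfl)
    exact hsub hg
  have hmemN : ∀ (g : G) (hg : g ∈ Subgroup.closure (A ∪ {(u : G)})),
      ((φ ⟨g, hg⟩ : ↥(Subgroup.closure (A ∪ {(v : G)}))) : G) ∈ N := by
    intro g hg
    induction hg using Subgroup.closure_induction with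
    | mem a ha =>
      rcases ha with ha | ha
      · rw [hfix _ ha]; exact hA ha
      · rw [Set.mem_singleton_iff] at ha; subst ha
        rw [hsend _ rfl]; exact v.2
    | one =>
      have h1 : (⟨1, one_mem _⟩ : ↥(Subgroup.closure (A ∪ {(u : G)}))) = 1 := rfl
      rw [h1, map_one]; exact N.one_mem
    | mul a b ha hb iha ihb =>
      have h1 : (⟨a * b, mul_mem ha hb⟩ : ↥(Subgroup.closure (A ∪ {(u : G)}))) =
          ⟨a, ha⟩ * ⟨b, hb⟩ := rfl
      rw [h1, map_mul]; exact N.mul_mem iha ihb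
    | inv a ha iha =>
      have h1 : (⟨a⁻¹, inv_mem ha⟩ : ↥(Subgroup.closure (A ∪ {(u : G)}))) = (⟨a, ha⟩)⁻¹ := rfl
      rw [h1, map_inv]; exact N.inv_mem iha
  set ι : ↥(Subgroup.closure (A' ∪ {u})) →* ↥(Subgroup.closure (A ∪ {(u : G)})) :=
    MonoidHom.codRestrict (N.subtype.comp (Subgroup.closure (A' ∪ {u})).subtype) _
      (fun g => hle (g : ↥N) g.2) with hι
  set Ψ : ↥(Subgroup.closure (A' ∪ {u})) →* ↥N :=
    MonoidHom.codRestrict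
      ((Subgroup.closure (A ∪ {(v : G)})).subtype.comp (φ.toMonoidHom.comp ι)) N
      (fun g => hmemN ((g : ↥N) : G) (hle (g : ↥N) g.2)) with hΨ
  have hcoeΨ : ∀ g : ↥(Subgroup.closure (A' ∪ {u})),
      ((Ψ g : ↥N) : G) = ((φ (ι g) : ↥(Subgroup.closure (A ∪ {(v : G)}))) : G) := fun g => rfl
  have hcoeι : ∀ g : ↥(Subgroup.closure (A' ∪ {u})),
      ((ι g : ↥(Subgroup.closure (A ∪ {(u : G)}))) : G) = ((g : ↥N) : G) := fun g => rfl
  have hinj : Function.Injective Ψ := by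
    intro a b hab
    have h1 : ((Ψ a : ↥N) : G) = ((Ψ b : ↥N) : G) := by rw [hab]
    rw [hcoeΨ, hcoeΨ] at h1
    have h2 : φ (ι a) = φ (ι b) := Subtype.ext h1
    have h3 : ι a = ι b := φ.injective h2
    have h4 : ((a : ↥N) : G) = ((b : ↥N) : G) := by rw [← hcoeι, ← hcoeι, h3]
    exact Subtype.ext (Subtype.ext h4)
  have himg : Ψ '' ((↑) ⁻¹' (A' ∪ {u})) = A' ∪ {v} := by
    ext b
    constructor
    · rintro ⟨g, hg, rfl⟩
      rcases hg with ha | h1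
      · refine Or.inl ?_
        show ((Ψ g : ↥N) : G) ∈ A
        rw [hcoeΨ, hfix _ (by rw [hcoeι]; exact ha), hcoeι]
        exact ha
      · refine Or.inr ?_
        have h2 : (g : ↥N) = u := h1
        rw [Set.mem_singleton_iff]
        apply Subtype.ext
        rw [hcoeΨ]
        exact hsend _ (by rw [hcoeι, h2])
    · rintro (hb | hb)
      · refine ⟨⟨b, Subgroup.subset_closure (Or.inl hb)⟩, Or.inl hb, ?_⟩
        apply Subtype.ext
        rw [hcoeΨ, hfix _ (by rw [hcoeι]; exact hb), hcoeι]
      · rw [Set.mem_singleton_iff] at hb; subst hb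
        refine ⟨⟨u, Subgroup.subset_closure (Or.inr rfl)⟩, Or.inr rfl, ?_⟩
        apply Subtype.ext
        rw [hcoeΨ]
        exact hsend _ (by rw [hcoeι])
  obtain ⟨e, he⟩ := exists_mulEquiv_of_closure_hom Ψ hinj himg
  refine ⟨e, fun g hg => ?_, fun g hg => ?_⟩
  · apply Subtype.ext
    rw [he, hcoeΨ, hfix _ (by rw [hcoeι]; exact hg), hcoeι]
  · apply Subtype.ext
    rw [he, hcoeΨ]
    exact hsend _ (by rw [hcoeι, hg])

end Helpers

/-- If `G₁ ⊴ G₂`, `C_{G₂}(G₁) = {e}`, `A ⊆ G₁` and `(G₁, A)` is a special pair,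
then `(G₂, A)` is a special pair. -/
theorem isSpecialPair_of_normal_of_centralizer_trivial {G₂ : Type u} [Group G₂]
    (G₁ : Subgroup G₂) [G₁.Normal]
    (hcent : Subgroup.centralizer (G₁ : Set G₂) = ⊥)
    (A : Set G₂) (hA : A ⊆ (G₁ : Set G₂))
    (hspec : IsSpecialPair ↥G₁ {a : ↥G₁ | (a : G₂) ∈ A}) :
    IsSpecialPair G₂ A := by
  intro x y hxy
  obtain ⟨φ, hfix, hsend⟩ := hxy
  have hxmem : x ∈ Subgroup.closure (A ∪ {x}) := Subgroup.subset_closure (Or.inr rfl)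
  have hφx : ((φ ⟨x, hxmem⟩ : ↥(Subgroup.closure (A ∪ {y}))) : G₂) = y := hsend _ rfl
  have hnorm : G₁.Normal := ‹_›
  have step1 : ∀ a ∈ A, x * a * x⁻¹ = y * a * y⁻¹ := by
    intro a ha
    have haG : a ∈ G₁ := hA ha
    have hamem : a ∈ Subgroup.closure (A ∪ {x}) := Subgroup.subset_closure (Or.inl ha)
    have hu : x * a * x⁻¹ ∈ Subgroup.closure (A ∪ {x}) :=
      mul_mem (mul_mem hxmem hamem) (inv_mem hxmem)
    have hkey : ((φ ⟨x * a * x⁻¹, hu⟩ : ↥(Subgroup.closure (A ∪ {y}))) : G₂) = y * a * y⁻¹ := by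
      have hsplit : (⟨x * a * x⁻¹, hu⟩ : ↥(Subgroup.closure (A ∪ {x}))) =
          ⟨x, hxmem⟩ * ⟨a, hamem⟩ * (⟨x, hxmem⟩)⁻¹ := rfl
      rw [hsplit, map_mul, map_mul, map_inv]
      push_cast
      rw [hφx, hfix ⟨a, hamem⟩ ha]
    have hFS : FixesAndSends A (x * a * x⁻¹) (y * a * y⁻¹) := by
      have h0 := fixesAndSends_restrict φ hfix hu
      rwa [hkey] at h0
    have h1 : x * a * x⁻¹ ∈ G₁ := hnorm.conj_mem a haG x
    have h2 : y * a * y⁻¹ ∈ G₁ := hnorm.conj_mem a haG y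
    have h3 := hspec ⟨_, h1⟩ ⟨_, h2⟩ (fixesAndSends_subtype hA ⟨_, h1⟩ ⟨_, h2⟩ hFS)
    exact congrArg Subtype.val h3
  have hcA : ∀ a ∈ A, (y⁻¹ * x) * a * (y⁻¹ * x)⁻¹ = a := by
    intro a ha
    have h1 := step1 a ha
    have : (y⁻¹ * x) * a * (y⁻¹ * x)⁻¹ = y⁻¹ * (x * a * x⁻¹) * y := by group
    rw [this, h1]
    group
  have step2 : ∀ g : G₂, g ∈ G₁ → (y⁻¹ * x) * g * (y⁻¹ * x)⁻¹ = g := by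
    intro g hg
    have hFS0 := fixesAndSends_of_equiv (MulAut.conj (y⁻¹ * x) : G₂ ≃* G₂)
      (fun a ha => hcA a ha) g
    have hconj : ((MulAut.conj (y⁻¹ * x) : G₂ ≃* G₂) g) = (y⁻¹ * x) * g * (y⁻¹ * x)⁻¹ := rfl
    rw [hconj] at hFS0
    have hcg : (y⁻¹ * x) * g * (y⁻¹ * x)⁻¹ ∈ G₁ := hnorm.conj_mem g hg _
    have h3 := hspec ⟨g, hg⟩ ⟨_, hcg⟩ (fixesAndSends_subtype hA ⟨g, hg⟩ ⟨_, hcg⟩ hFS0)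
    exact (congrArg Subtype.val h3).symm
  have hc : y⁻¹ * x ∈ Subgroup.centralizer (G₁ : Set G₂) := by
    rw [Subgroup.mem_centralizer_iff]
    intro g hg
    have h1 := step2 g hg
    have h2 : (y⁻¹ * x) * g = g * (y⁻¹ * x) := by
      conv_rhs => rw [← h1]
      group
    exact h2.symm
  rw [hcent, Subgroup.mem_bot] at hc
  have : y = x := inv_mul_eq_one.mp hc
  exact this.symm
end

section
/- Assume G₁ is a normal subgroup of G₂, the centralizer of G₁ in G₂ is trivial (C_{G₂}(G₁) = {e}), A ⊆ G₁, and (G₁, A) is a special pair. Then the centralizer of A in G₂ is trivial: C_{G₂}(A) = {e}. -/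
universe u

/-- If `G₁ ⊴ G₂`, `C_{G₂}(G₁) = {e}`, `A ⊆ G₁` and `(G₁, A)` is a special pair,
then the centralizer of `A` in `G₂` is trivial: `C_{G₂}(A) = {e}`. -/
theorem centralizer_trivial_of_normal_of_specialPair {G₂ : Type u} [Group G₂]
    (G₁ : Subgroup G₂) [G₁.Normal]
    (hcent : Subgroup.centralizer (G₁ : Set G₂) = ⊥)
    (A : Set G₂) (hA : A ⊆ (G₁ : Set G₂))
    (hspec : IsSpecialPair ↥G₁ {a : ↥G₁ | (a : G₂) ∈ A}) :
    Subgroup.centralizer A = ⊥ := by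
  rw [eq_bot_iff]
  intro c hc
  rw [Subgroup.mem_centralizer_iff] at hc
  rw [← hcent]
  rw [Subgroup.mem_centralizer_iff]
  intro h hh
  set S : Set ↥G₁ := {a : ↥G₁ | (a : G₂) ∈ A} with hS
  set φ : MulAut ↥G₁ := MulAut.conjNormal c with hφ
  have hfix : ∀ a : ↥G₁, (a : G₂) ∈ A → φ a = a := by
    intro a ha
    ext
    rw [MulAut.conjNormal_apply, mul_inv_eq_iff_eq_mul]
    exact (hc a ha).symm
  have key : ∀ x : ↥G₁, φ x = x := by
    intro x
    have himg : φ '' (S ∪ {x}) = S ∪ {φ x} := by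
      rw [Set.image_union, Set.image_singleton]
      congr 1
      ext a
      constructor
      · rintro ⟨b, hb, rfl⟩
        rw [hfix b hb]; exact hb
      · intro ha
        exact ⟨a, ha, hfix a ha⟩
    have hmap : (Subgroup.closure (S ∪ {x})).map (φ : ↥G₁ →* ↥G₁)
        = Subgroup.closure (S ∪ {φ x}) := by
      rw [MonoidHom.map_closure]
      exact congrArg Subgroup.closure himg
    refine (hspec x (φ x) ⟨(φ.subgroupMap _).trans (MulEquiv.subgroupCongr hmap), ?_, ?_⟩).symm
    · intro g hg
      simp only [MulEquiv.trans_apply, MulEquiv.subgroupCongr_apply,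
        MulEquiv.coe_subgroupMap_apply]
      exact hfix g hg
    · intro g hg
      simp only [MulEquiv.trans_apply, MulEquiv.subgroupCongr_apply,
        MulEquiv.coe_subgroupMap_apply]
      exact congrArg φ hg
  have := key ⟨h, hh⟩
  have : (φ ⟨h, hh⟩ : G₂) = h := congrArg _ this
  rw [MulAut.conjNormal_apply] at this
  have : c * h = h * c := by
    have := congrArg (· * c) this
    simpa [mul_assoc] using this
  exact this.symm
end

section
/- If G is a centerless group, then the pair (Aut(G), Inn(G)) is a special pair, where Inn(G) is regarded as a subset of Aut(G). -/
universe u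

lemma conj_conj_aux {G : Type u} [Group G] (x : MulAut G) (g : G) :
    x * MulAut.conj g * x⁻¹ = MulAut.conj (x g) := by
  ext a
  simp [MulAut.conj_apply, map_mul, map_inv, mul_assoc]

/-- If `G` is a centerless group, then `(Aut(G), Inn(G))` is a special pair,
where `Inn(G)` (the image of `g ↦` conjugation by `g`) is regarded as a subset
of `Aut(G)`. -/
theorem isSpecialPair_aut_inn (G : Type u) [Group G] (hG : Subgroup.center G = ⊥) :
    IsSpecialPair (MulAut G)
      (((MulAut.conj : G →* MulAut G).range : Subgroup (MulAut G)) : Set (MulAut G)) := by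
  intro x y h
  have hinj : Function.Injective (MulAut.conj : G →* MulAut G) := by
    intro a b hab
    have h : ∀ c : G, a * c * a⁻¹ = b * c * b⁻¹ := fun c => by
      have := DFunLike.congr_fun hab c
      simpa [MulAut.conj_apply] using this
    have hc : b⁻¹ * a ∈ Subgroup.center G := by
      rw [Subgroup.mem_center_iff]
      intro c
      calc c * (b⁻¹ * a) = b⁻¹ * (b * c * b⁻¹) * a := by group
        _ = b⁻¹ * (a * c * a⁻¹) * a := by rw [h c]
        _ = b⁻¹ * a * c := by group
    rw [hG, Subgroup.mem_bot] at hc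
    have : a = b * 1 := by rw [← hc]; group
    simpa using this
  set S : Subgroup (MulAut G) :=
    Subgroup.closure (((MulAut.conj : G →* MulAut G).range : Set (MulAut G)) ∪ {x}) with hS
  obtain ⟨φ, hfix, hsend⟩ := h
  have hx : x ∈ S := Subgroup.subset_closure (Or.inr rfl)
  have hconj : ∀ g : G, MulAut.conj g ∈ S :=
    fun g => Subgroup.subset_closure (Or.inl ⟨g, rfl⟩)
  have key : ∀ g : G, x g = y g := by
    intro g
    apply hinj
    set X : ↥S := ⟨x, hx⟩
    set Cg : ↥S := ⟨MulAut.conj g, hconj g⟩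
    have h1 : ((X * Cg * X⁻¹ : ↥S) : MulAut G) = MulAut.conj (x g) := by
      push_cast
      exact conj_conj_aux x g
    have hy : (φ X : MulAut G) = y := hsend X rfl
    have hCg : (φ Cg : MulAut G) = MulAut.conj g := hfix Cg ⟨g, rfl⟩
    have h2 : (φ (X * Cg * X⁻¹) : MulAut G) = MulAut.conj (x g) := by
      rw [hfix _ (by rw [h1]; exact ⟨x g, rfl⟩), h1]
    have h3 : (φ (X * Cg * X⁻¹) : MulAut G) = MulAut.conj (y g) := by
      rw [map_mul, map_mul, map_inv]
      push_cast
      rw [hy, hCg]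
      exact conj_conj_aux y g
    exact h2.symm.trans h3
  exact MulEquiv.ext key
end

section
/- Let G be a centerless group with automorphism tower ⟨G^α⟩, and let β < γ be ordinals. Then the centralizer of G in G^γ is trivial (C_{G^γ}(G) = {e}), and the normalizer of G^β in G^γ equals G^{β+1}: N_{G^γ}(G^β) = G^{β+1}. -/
universe u

/-- The automorphism tower of a centerless group `G`: an ordinal-indexed increasing
continuous chain of groups, starting at `G`, where each successor stage is (identified
with) the automorphism group of the previous stage via the conjugation embedding. -/
structure AutTower (G : Type u) [Group G] where
  /-- the `o`-th stage `G^o` of the tower -/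
  Stage : Ordinal.{u} → GrpCat.{u}
  /-- the inclusion maps of the tower -/
  map : ∀ ⦃o₁ o₂ : Ordinal.{u}⦄, o₁ ≤ o₂ → (↥(Stage o₁) →* ↥(Stage o₂))
  map_id : ∀ (o : Ordinal.{u}) (x : ↥(Stage o)), map le_rfl x = x
  map_comp : ∀ ⦃o₁ o₂ o₃ : Ordinal.{u}⦄ (h₁ : o₁ ≤ o₂) (h₂ : o₂ ≤ o₃) (x : ↥(Stage o₁)),
      map h₂ (map h₁ x) = map (h₁.trans h₂) x
  map_injective : ∀ ⦃o₁ o₂ : Ordinal.{u}⦄ (h : o₁ ≤ o₂), Function.Injective (map h)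
  /-- the identification of `G` with the `0`-th stage -/
  emb0 : G ≃* ↥(Stage 0)
  /-- the identification of the `(o+1)`-st stage with `Aut(G^o)` -/
  succIso : ∀ o : Ordinal.{u}, ↥(Stage (o + 1)) ≃* MulAut ↥(Stage o)
  /-- under the above identification, the inclusion `G^o ≤ G^{o+1}` is `g ↦` conjugation by `g` -/
  succIso_map : ∀ (o : Ordinal.{u}) (x : ↥(Stage o)),
      succIso o (map (show o ≤ o + 1 by simp) x) = MulAut.conj x
  /-- at limit stages the tower is continuous: `G^δ = ⋃_{α<δ} G^α` -/
  limit_covers : ∀ (o : Ordinal.{u}), Order.IsSuccLimit o → ∀ x : ↥(Stage o),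
      ∃ (o' : Ordinal.{u}) (h : o' < o), x ∈ Set.range (map h.le)

namespace AutTower

variable {G : Type u} [Group G]

/-- the embedding of `G` into the `o`-th stage of its automorphism tower -/
def embed (T : AutTower G) (o : Ordinal.{u}) : G →* ↥(T.Stage o) :=
  (T.map (show (0 : Ordinal.{u}) ≤ o by simp)).comp T.emb0.toMonoidHom

/-- `G^{o+1} = G^o`, i.e. the inclusion of stage `o` into stage `o+1` is onto -/
def StabilizesAt (T : AutTower G) (o : Ordinal.{u}) : Prop :=
  Function.Surjective (T.map (show o ≤ o + 1 by simp))

end AutTower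


namespace AutTower

variable {G : Type u} [Group G] (T : AutTower G)

lemma map_id' (o : Ordinal.{u}) (h : o ≤ o) (x : ↥(T.Stage o)) : T.map h x = x :=
  T.map_id o x

lemma conj_map (o : Ordinal.{u}) (x : ↥(T.Stage (o+1))) (y : ↥(T.Stage o)) :
    x * T.map (le_self_add (a := o) (b := 1)) y * x⁻¹
      = T.map (le_self_add (a := o) (b := 1)) (T.succIso o x y) := by
  apply (T.succIso o).injective
  rw [T.succIso_map]
  simp only [map_mul, map_inv, T.succIso_map]
  ext z
  simp [MulAut.conj_apply]

lemma embed_eq (o₁ o₂ : Ordinal.{u}) (h : o₁ ≤ o₂) (g : G) :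
    T.embed o₂ g = T.map h (T.embed o₁ g) :=
  (T.map_comp (zero_le (a := o₁)) h (T.emb0 g)).symm

lemma comm_embed_eq_one (hG : Subgroup.center G = ⊥) :
    ∀ (γ : Ordinal.{u}) (x : ↥(T.Stage γ)),
      (∀ g : G, x * T.embed γ g = T.embed γ g * x) → x = 1 := by
  intro γ
  induction γ using Ordinal.induction with
  | _ γ IH =>
  intro x hx
  rcases Ordinal.zero_or_succ_or_isSuccLimit γ with h0 | ⟨α, hα⟩ | hlim
  · subst h0
    have hc : T.emb0.symm x ∈ Subgroup.center G := by
      rw [Subgroup.mem_center_iff]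
      intro g
      apply T.emb0.injective
      simp only [map_mul, MulEquiv.apply_symm_apply]
      have h0 : T.embed 0 g = T.emb0 g := T.map_id' 0 (zero_le (a := (0 : Ordinal.{u}))) (T.emb0 g)
      have hxg := hx g
      rw [h0] at hxg
      exact hxg.symm
    rw [hG, Subgroup.mem_bot] at hc
    have := congrArg T.emb0 hc
    simpa using this
  · rw [Order.succ_eq_add_one] at hα
    subst hα
    set π := T.succIso α x with hπ
    have key : ∀ (β : Ordinal.{u}), ∀ (hβ : β ≤ α) (y : ↥(T.Stage β)),
        π (T.map hβ y) = T.map hβ y := by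
      intro β
      induction β using Ordinal.induction with
      | _ β IHβ =>
      intro hβ y
      rcases Ordinal.zero_or_succ_or_isSuccLimit β with h0 | ⟨β₀, hβ₀⟩ | hlim
      · subst h0
        set g := T.emb0.symm y with hg
        have hy : y = T.emb0 g := by simp [hg]
        have h1 : x * T.embed (α+1) g * x⁻¹ = T.embed (α+1) g := by
          rw [hx g]; group
        have h2 : T.embed (α+1) g
            = T.map (le_self_add (a := α) (b := 1)) (T.embed α g) :=
          T.embed_eq α (α+1) (le_self_add (a := α) (b := 1)) g
        have h3 := T.conj_map α x (T.embed α g)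
        rw [← h2, h1, h2] at h3
        have h4 := T.map_injective (le_self_add (a := α) (b := 1)) h3.symm
        have h5 : T.map hβ y = T.embed α g := by
          rw [hy]; rfl
        rw [h5, h4]
      · rw [Order.succ_eq_add_one] at hβ₀
        subst hβ₀
        have hlt : β₀ < β₀ + 1 := by
          rw [← Order.succ_eq_add_one]; exact Order.lt_succ β₀
        have hb0a : β₀ ≤ α := hlt.le.trans hβ
        set σ := T.succIso β₀ y with hσ
        set Y := T.map hβ y with hY
        have claim : ∀ z : ↥(T.Stage β₀),
            Y * T.map hb0a z * Y⁻¹ = T.map hb0a (σ z) := by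
          intro z
          have h6 := congrArg (T.map hβ) (T.conj_map β₀ y z)
          simp only [map_mul, map_inv] at h6
          rw [T.map_comp, T.map_comp] at h6
          exact h6
        have hππ : ∀ z : ↥(T.Stage β₀), π (T.map hb0a z) = T.map hb0a z :=
          fun z => IHβ β₀ hlt hb0a z
        have hd : ∀ z : ↥(T.Stage β₀),
            (Y⁻¹ * π Y) * T.map hb0a z = T.map hb0a z * (Y⁻¹ * π Y) := by
          intro z
          have h7 : π Y * T.map hb0a z * (π Y)⁻¹ = T.map hb0a (σ z) := by
            have := congrArg π (claim z)
            simp only [map_mul, map_inv, hππ z, hππ (σ z)] at this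
            exact this
          have h8 : π Y * T.map hb0a z * (π Y)⁻¹ = Y * T.map hb0a z * Y⁻¹ := by
            rw [h7, claim z]
          have h9 := congrArg (fun t => Y⁻¹ * t * π Y) h8
          simpa [mul_assoc] using h9
        have hcomm : ∀ g : G, (Y⁻¹ * π Y) * T.embed α g = T.embed α g * (Y⁻¹ * π Y) := by
          intro g
          rw [T.embed_eq β₀ α hb0a g]
          exact hd (T.embed β₀ g)
        have hone : Y⁻¹ * π Y = 1 := by
          refine IH α ?_ _ hcomm
          rw [← Order.succ_eq_add_one]; exact Order.lt_succ α
        have hYY : π Y = Y := by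
          simpa [mul_assoc] using congrArg (Y * ·) hone
        exact hYY
      · obtain ⟨β', hβ', y', hy'⟩ := T.limit_covers β hlim y
        have : T.map hβ y = T.map (hβ'.le.trans hβ) y' := by
          rw [← hy', T.map_comp]
        rw [this]
        exact IHβ β' hβ' _ y'
    have hπ1 : π = 1 := by
      ext z
      have := key α le_rfl z
      rwa [T.map_id' α le_rfl z] at this
    have : T.succIso α x = T.succIso α 1 := by rw [map_one, ← hπ, hπ1]
    exact (T.succIso α).injective this
  · obtain ⟨α, hα, x', hx'⟩ := T.limit_covers γ hlim x
    have hx'c : ∀ g : G, x' * T.embed α g = T.embed α g * x' := by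
      intro g
      apply T.map_injective hα.le
      have := hx g
      rw [T.embed_eq α γ hα.le g, ← hx'] at this
      simpa only [map_mul] using this
    have : x' = 1 := IH α hα x' hx'c
    rw [← hx', this, map_one]

lemma conj_range (β γ : Ordinal.{u}) (h1 : β + 1 ≤ γ) (hb : β ≤ γ)
    (w : ↥(T.Stage (β+1))) (y : ↥(T.Stage β)) :
    T.map h1 w * T.map hb y * (T.map h1 w)⁻¹ = T.map hb (T.succIso β w y) := by
  have h2 := congrArg (T.map h1) (T.conj_map β w y)
  simp only [map_mul, map_inv] at h2
  rw [T.map_comp, T.map_comp] at h2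
  exact h2

end AutTower

/-- If `G` is centerless and `β < γ`, then in the automorphism tower of `G` the
centralizer of `G` in `G^γ` is trivial, `C_{G^γ}(G) = {e}`, and the normalizer of
`G^β` in `G^γ` is `G^{β+1}`: `N_{G^γ}(G^β) = G^{β+1}` (stages being regarded as
subgroups of `G^γ` via the tower embeddings). -/
theorem centralizer_trivial_and_normalizer_eq_succ {G : Type u} [Group G]
    (hG : Subgroup.center G = ⊥) (T : AutTower G) (β γ : Ordinal.{u}) (h : β < γ) :
    Subgroup.centralizer (Set.range (T.embed γ)) = ⊥ ∧
      Subgroup.normalizer ((T.map h.le).range : Set _) = (T.map (Order.add_one_le_iff.mpr h)).range := by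
  have part1 : Subgroup.centralizer (Set.range (T.embed γ)) = ⊥ := by
    rw [Subgroup.eq_bot_iff_forall]
    intro x hx
    refine T.comm_embed_eq_one hG γ x (fun g => ?_)
    exact ((Subgroup.mem_centralizer_iff.mp hx) (T.embed γ g) ⟨g, rfl⟩).symm
  refine ⟨part1, ?_⟩
  have h1 : β + 1 ≤ γ := Order.add_one_le_iff.mpr h
  ext x
  rw [Subgroup.mem_normalizer_iff]
  constructor
  · intro hn
    have hch : ∀ y : ↥(T.Stage β), ∃ z, T.map h.le z = x * T.map h.le y * x⁻¹ := by
      intro y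
      obtain ⟨z, hz⟩ := (hn (T.map h.le y)).mp ⟨y, rfl⟩
      exact ⟨z, hz⟩
    choose f hf using hch
    have finj : Function.Injective f := by
      intro a b hab
      apply T.map_injective h.le
      have ha := hf a
      rw [hab, hf b] at ha
      exact mul_left_cancel (mul_right_cancel ha.symm)
    have fsurj : Function.Surjective f := by
      intro z
      have hz : x⁻¹ * T.map h.le z * x ∈ (T.map h.le).range := by
        apply (hn (x⁻¹ * T.map h.le z * x)).mpr
        have he : x * (x⁻¹ * T.map h.le z * x) * x⁻¹ = T.map h.le z := by group
        rw [he]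
        exact ⟨z, rfl⟩
      obtain ⟨u, hu⟩ := hz
      refine ⟨u, ?_⟩
      apply T.map_injective h.le
      rw [hf u, hu]
      group
    have fmul : ∀ a b, f (a * b) = f a * f b := by
      intro a b
      apply T.map_injective h.le
      rw [map_mul, hf, hf, hf, map_mul]
      group
    let fhom : ↥(T.Stage β) →* ↥(T.Stage β) := MonoidHom.mk' f fmul
    let σ : MulAut ↥(T.Stage β) := MulEquiv.ofBijective fhom ⟨finj, fsurj⟩
    let w : ↥(T.Stage (β+1)) := (T.succIso β).symm σ
    have hσw : T.succIso β w = σ := (T.succIso β).apply_symm_apply σ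
    set W := T.map h1 w with hW
    have hxM : ∀ y : ↥(T.Stage β),
        x * T.map h.le y * x⁻¹ = W * T.map h.le y * W⁻¹ := by
      intro y
      rw [hW, T.conj_range β γ h1 h.le w y, hσw, ← hf y]
      rfl
    have hdy : ∀ y : ↥(T.Stage β),
        (W⁻¹ * x) * T.map h.le y = T.map h.le y * (W⁻¹ * x) := by
      intro y
      have h9 := congrArg (fun t => W⁻¹ * t * x) (hxM y)
      simpa [mul_assoc] using h9
    have hdc : ∀ g : G, (W⁻¹ * x) * T.embed γ g = T.embed γ g * (W⁻¹ * x) := by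
      intro g
      rw [T.embed_eq β γ h.le g]
      exact hdy (T.embed β g)
    have hd1 : W⁻¹ * x = 1 := T.comm_embed_eq_one hG γ (W⁻¹ * x) hdc
    exact ⟨w, inv_mul_eq_one.mp hd1⟩
  · rintro ⟨w, rfl⟩ n
    constructor
    · rintro ⟨y, rfl⟩
      exact ⟨T.succIso β w y, (T.conj_range β γ h1 h.le w y).symm⟩
    · rintro ⟨y, hy⟩
      refine ⟨T.succIso β w⁻¹ y, ?_⟩
      have h10 := T.conj_range β γ h1 h.le w⁻¹ y
      rw [map_inv, inv_inv] at h10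
      have hy' : T.map h.le y = T.map h1 w * n * (T.map h1 w)⁻¹ := hy
      rw [← h10, hy']
      group
end

section
/- Let G be a group whose center Z(G) = {e, a} has exactly two elements, and suppose H₁ ≠ H₂ are two distinct subgroups of G of index 2 such that Z(H₁) = Z(H₂) = Z(G). Then (Aut(G), Inn(G)) is not a special pair: the maps x_i (i = 1,2) defined by x_i(g) = g for g ∈ H_i and x_i(g) = ag for g ∉ H_i are two distinct automorphisms of G, neither inner, and there is an isomorphism from ⟨Inn(G) ∪ {x₁}⟩ onto ⟨Inn(G) ∪ {x₂}⟩ fixing Inn(G) pointwise and sending x₁ to x₂. -/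
universe u

section AuxAut

variable {G : Type u} [Group G]

open Classical in
/-- The map `g ↦ g` on `H`, `g ↦ a * g` off `H`. -/
noncomputable def autTwoFun (a : G) (H : Subgroup G) : G → G :=
  fun g => if g ∈ H then g else a * g

theorem autTwoFun_mem {a : G} {H : Subgroup G} {g : G} (hg : g ∈ H) :
    autTwoFun a H g = g := if_pos hg

theorem autTwoFun_not_mem {a : G} {H : Subgroup G} {g : G} (hg : g ∉ H) :
    autTwoFun a H g = a * g := if_neg hg

theorem autTwoFun_mul {a : G} {H : Subgroup G} (hc : a ∈ Subgroup.center G)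
    (ha2 : a * a = 1) (hidx : H.index = 2) (g h : G) :
    autTwoFun a H (g * h) = autTwoFun a H g * autTwoFun a H h := by
  have hcm : ∀ x : G, x * a = a * x := fun x => Subgroup.mem_center_iff.mp hc x
  by_cases hg : g ∈ H <;> by_cases hh : h ∈ H
  · rw [autTwoFun_mem hg, autTwoFun_mem hh, autTwoFun_mem (H.mul_mem hg hh)]
  · rw [autTwoFun_mem hg, autTwoFun_not_mem hh,
      autTwoFun_not_mem (by rw [Subgroup.mul_mem_iff_of_index_two hidx]; tauto),
      ← mul_assoc g a h, hcm g, mul_assoc]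
  · rw [autTwoFun_not_mem hg, autTwoFun_mem hh,
      autTwoFun_not_mem (by rw [Subgroup.mul_mem_iff_of_index_two hidx]; tauto),
      mul_assoc]
  · rw [autTwoFun_not_mem hg, autTwoFun_not_mem hh,
      autTwoFun_mem (by rw [Subgroup.mul_mem_iff_of_index_two hidx]; tauto)]
    rw [mul_assoc a g (a * h), ← mul_assoc g a h, hcm g, mul_assoc a g h,
      ← mul_assoc a a (g * h), ha2, one_mul]

theorem autTwoFun_invol {a : G} {H : Subgroup G}
    (ha2 : a * a = 1) (haH : a ∈ H) (hidx : H.index = 2) (g : G) :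
    autTwoFun a H (autTwoFun a H g) = g := by
  by_cases hg : g ∈ H
  · rw [autTwoFun_mem hg, autTwoFun_mem hg]
  · rw [autTwoFun_not_mem hg,
      autTwoFun_not_mem (by rw [Subgroup.mul_mem_iff_of_index_two hidx]; tauto),
      ← mul_assoc, ha2, one_mul]

/-- The automorphism `g ↦ g` on `H`, `g ↦ a * g` off `H`. -/
noncomputable def autTwo (a : G) (H : Subgroup G) (hc : a ∈ Subgroup.center G)
    (ha2 : a * a = 1) (haH : a ∈ H) (hidx : H.index = 2) : MulAut G where
  toFun := autTwoFun a H
  invFun := autTwoFun a H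
  left_inv g := autTwoFun_invol ha2 haH hidx g
  right_inv g := autTwoFun_invol ha2 haH hidx g
  map_mul' := autTwoFun_mul hc ha2 hidx

variable {a : G} {H : Subgroup G} {hc : a ∈ Subgroup.center G} {ha2 : a * a = 1}
  {haH : a ∈ H} {hidx : H.index = 2}

theorem autTwo_apply (g : G) : autTwo a H hc ha2 haH hidx g = autTwoFun a H g := rfl

theorem autTwo_sq : autTwo a H hc ha2 haH hidx * autTwo a H hc ha2 haH hidx = 1 := by
  ext g
  exact autTwoFun_invol ha2 haH hidx g

theorem autTwo_commute_conj (c : G) :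
    Commute (autTwo a H hc ha2 haH hidx) (MulAut.conj c) := by
  have hcm : ∀ x : G, x * a = a * x := fun x => Subgroup.mem_center_iff.mp hc x
  have hconj : ∀ g : G, c * g * c⁻¹ ∈ H ↔ g ∈ H := by
    intro g
    rw [Subgroup.mul_mem_iff_of_index_two hidx, Subgroup.mul_mem_iff_of_index_two hidx,
      H.inv_mem_iff]
    tauto
  ext g
  rw [MulAut.mul_apply, MulAut.mul_apply, MulAut.conj_apply, MulAut.conj_apply,
    autTwo_apply, autTwo_apply]
  by_cases hg : g ∈ H
  · rw [autTwoFun_mem hg, autTwoFun_mem ((hconj g).mpr hg)]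
  · rw [autTwoFun_not_mem hg, autTwoFun_not_mem (fun h => hg ((hconj g).mp h)),
      ← mul_assoc, ← mul_assoc, ← hcm c, mul_assoc c a g]

theorem autTwo_not_inner
    (hmap : Subgroup.map H.subtype (Subgroup.center H) = Subgroup.center G)
    (ha1 : a ≠ 1) :
    autTwo a H hc ha2 haH hidx ∉ (MulAut.conj : G →* MulAut G).range := by
  rintro ⟨c, hcx⟩
  obtain ⟨g₀, hg₀⟩ : ∃ g, g ∉ H := by
    by_contra h
    push_neg at h
    have : H = ⊤ := (Subgroup.eq_top_iff' H).mpr h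
    rw [this, Subgroup.index_top] at hidx
    omega
  have happ : ∀ g : G, c * g * c⁻¹ = autTwoFun a H g := fun g => by
    have := DFunLike.congr_fun hcx g
    rwa [MulAut.conj_apply, autTwo_apply] at this
  by_cases hcH : c ∈ H
  · have hcen : c ∈ Subgroup.center G := by
      rw [← hmap]
      refine ⟨⟨c, hcH⟩, Subgroup.mem_center_iff.mpr fun y => ?_, rfl⟩
      have h1 := happ (y : G)
      rw [autTwoFun_mem y.2] at h1
      have h2 : c * (y : G) = (y : G) * c := mul_inv_eq_iff_eq_mul.mp h1
      ext
      exact h2.symm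
    have h3 := happ g₀
    rw [autTwoFun_not_mem hg₀, ← Subgroup.mem_center_iff.mp hcen g₀,
      mul_inv_cancel_right] at h3
    exact ha1 (by rwa [right_eq_mul] at h3)
  · have h3 := happ c
    rw [autTwoFun_not_mem hcH, mul_inv_cancel_right] at h3
    exact ha1 (by rwa [right_eq_mul] at h3)

end AuxAut

section Closure

variable {M : Type u} [Group M] (N : Subgroup M)

theorem closure_union_aux (x y : M) (hx2 : x * x = 1)
    (hcx : ∀ n ∈ N, Commute x n) (hcy : ∀ n ∈ N, Commute y n)
    (hxy : Commute y x) :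
    ∀ σ ∈ Subgroup.closure ((N : Set M) ∪ {x}),
      Commute x σ ∧ Commute y σ ∧ (σ ∈ N ∨ σ * x ∈ N) := by
  intro σ hσ
  induction hσ using Subgroup.closure_induction with
  | mem s hs =>
    rcases hs with hs | hs
    · exact ⟨hcx s hs, hcy s hs, Or.inl hs⟩
    · rw [Set.mem_singleton_iff] at hs
      rw [hs]
      exact ⟨Commute.refl x, hxy, Or.inr (by rw [hx2]; exact N.one_mem)⟩
  | one => exact ⟨Commute.one_right x, Commute.one_right y, Or.inl N.one_mem⟩
  | mul s t hs ht ihs iht =>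
    refine ⟨ihs.1.mul_right iht.1, ihs.2.1.mul_right iht.2.1, ?_⟩
    rcases ihs.2.2 with h1 | h1 <;> rcases iht.2.2 with h2 | h2
    · exact Or.inl (N.mul_mem h1 h2)
    · exact Or.inr (by rw [mul_assoc]; exact N.mul_mem h1 h2)
    · refine Or.inr ?_
      have : s * t * x = (s * x) * t := by
        rw [mul_assoc, mul_assoc, (iht.1).eq]
      rw [this]
      exact N.mul_mem h1 h2
    · refine Or.inl ?_
      have key : (s * x) * (t * x) = s * t := by
        rw [mul_assoc s x (t * x), ← mul_assoc x t x, (iht.1).eq, mul_assoc t x x,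
          hx2, mul_one]
      rw [← key]
      exact N.mul_mem h1 h2
  | inv s hs ihs =>
    refine ⟨ihs.1.inv_right, ihs.2.1.inv_right, ?_⟩
    rcases ihs.2.2 with h1 | h1
    · exact Or.inl (N.inv_mem h1)
    · refine Or.inr ?_
      have hxinv : x⁻¹ = x := inv_eq_of_mul_eq_one_right hx2
      have : s⁻¹ * x = (s * x)⁻¹ := by
        rw [mul_inv_rev, hxinv, (ihs.1.inv_right).eq]
      rw [this]
      exact N.inv_mem h1

theorem mem_closure_union (x : M) (σ : M) (h : σ ∈ N ∨ σ * x ∈ N) :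
    σ ∈ Subgroup.closure ((N : Set M) ∪ {x}) := by
  rcases h with h | h
  · exact Subgroup.subset_closure (Or.inl h)
  · have : σ = (σ * x) * x⁻¹ := (mul_inv_cancel_right σ x).symm
    rw [this]
    exact mul_mem (Subgroup.subset_closure (Or.inl h))
      (inv_mem (Subgroup.subset_closure (Or.inr rfl)))

theorem fixesAndSends_aux (x y : M) (hx2 : x * x = 1) (hy2 : y * y = 1)
    (hcx : ∀ n ∈ N, Commute x n) (hcy : ∀ n ∈ N, Commute y n)
    (hxy : Commute x y) (hxN : x ∉ N) (hyN : y ∉ N) :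
    FixesAndSends (N : Set M) x y := by
  classical
  have hX := closure_union_aux N x y hx2 hcx hcy hxy.symm
  have hY := closure_union_aux N y x hy2 hcy hcx hxy
  have hxyyx : (x * y) * (y * x) = 1 := by
    rw [mul_assoc x y (y * x), ← mul_assoc y y x, hy2, one_mul, hx2]
  have hyxxy : (y * x) * (x * y) = 1 := by
    rw [mul_assoc y x (x * y), ← mul_assoc x x y, hx2, one_mul, hy2]
  have hsq : (x * y) * (x * y) = 1 := by
    rw [mul_assoc x y (x * y), ← mul_assoc y x y, ← hxy.eq, mul_assoc x y y, hy2,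
      mul_one, hx2]
  have hsq' : (y * x) * (y * x) = 1 := by
    rw [mul_assoc y x (y * x), ← mul_assoc x y x, hxy.eq, mul_assoc y x x, hx2,
      mul_one, hy2]
  -- forward membership
  have fwd : ∀ σ : ↥(Subgroup.closure ((N : Set M) ∪ {x})),
      (if (σ : M) ∈ N then (σ : M) else (σ : M) * (x * y)) ∈
        Subgroup.closure ((N : Set M) ∪ {y}) := by
    intro σ
    by_cases hσ : (σ : M) ∈ N
    · rw [if_pos hσ]; exact mem_closure_union N y _ (Or.inl hσ)
    · rw [if_neg hσ]
      have hσx : (σ : M) * x ∈ N := (hX σ σ.2).2.2.resolve_left hσ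
      refine mem_closure_union N y _ (Or.inr ?_)
      have : (σ : M) * (x * y) * y = (σ : M) * x := by
        rw [mul_assoc (σ : M) (x * y) y, mul_assoc x y y, hy2, mul_one]
      rw [this]; exact hσx
  have bwd : ∀ τ : ↥(Subgroup.closure ((N : Set M) ∪ {y})),
      (if (τ : M) ∈ N then (τ : M) else (τ : M) * (y * x)) ∈
        Subgroup.closure ((N : Set M) ∪ {x}) := by
    intro τ
    by_cases hτ : (τ : M) ∈ N
    · rw [if_pos hτ]; exact mem_closure_union N x _ (Or.inl hτ)
    · rw [if_neg hτ]
      have hτy : (τ : M) * y ∈ N := (hY τ τ.2).2.2.resolve_left hτ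
      refine mem_closure_union N x _ (Or.inr ?_)
      have : (τ : M) * (y * x) * x = (τ : M) * y := by
        rw [mul_assoc (τ : M) (y * x) x, mul_assoc y x x, hx2, mul_one]
      rw [this]; exact hτy
  -- the two maps
  set X := Subgroup.closure ((N : Set M) ∪ {x}) with hXdef
  set Y := Subgroup.closure ((N : Set M) ∪ {y}) with hYdef
  let F : ↥X → ↥Y := fun σ => ⟨if (σ : M) ∈ N then (σ : M) else (σ : M) * (x * y), fwd σ⟩
  let B : ↥Y → ↥X := fun τ => ⟨if (τ : M) ∈ N then (τ : M) else (τ : M) * (y * x), bwd τ⟩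
  have hFcoe : ∀ σ : ↥X, (F σ : M) = if (σ : M) ∈ N then (σ : M) else (σ : M) * (x * y) :=
    fun _ => rfl
  have hBcoe : ∀ τ : ↥Y, (B τ : M) = if (τ : M) ∈ N then (τ : M) else (τ : M) * (y * x) :=
    fun _ => rfl
  -- d σ not in N when σ not in N
  have hFnot : ∀ σ : ↥X, (σ : M) ∉ N → (σ : M) * (x * y) ∉ N := by
    intro σ hσ hmem
    have hσx : (σ : M) * x ∈ N := (hX σ σ.2).2.2.resolve_left hσ
    have : y ∈ N := by
      have h1 : ((σ : M) * x)⁻¹ * ((σ : M) * (x * y)) ∈ N := N.mul_mem (N.inv_mem hσx) hmem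
      rwa [← mul_assoc (σ : M) x y, inv_mul_cancel_left] at h1
    exact hyN this
  have hBnot : ∀ τ : ↥Y, (τ : M) ∉ N → (τ : M) * (y * x) ∉ N := by
    intro τ hτ hmem
    have hτy : (τ : M) * y ∈ N := (hY τ τ.2).2.2.resolve_left hτ
    have : x ∈ N := by
      have h1 : ((τ : M) * y)⁻¹ * ((τ : M) * (y * x)) ∈ N := N.mul_mem (N.inv_mem hτy) hmem
      rwa [← mul_assoc (τ : M) y x, inv_mul_cancel_left] at h1
    exact hxN this
  have hleft : ∀ σ : ↥X, B (F σ) = σ := by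
    intro σ
    apply Subtype.ext
    rw [hBcoe, hFcoe]
    by_cases hσ : (σ : M) ∈ N
    · rw [if_pos hσ, if_pos hσ]
    · rw [if_neg hσ, if_neg (hFnot σ hσ), mul_assoc, hxyyx, mul_one]
  have hright : ∀ τ : ↥Y, F (B τ) = τ := by
    intro τ
    apply Subtype.ext
    rw [hFcoe, hBcoe]
    by_cases hτ : (τ : M) ∈ N
    · rw [if_pos hτ, if_pos hτ]
    · rw [if_neg hτ, if_neg (hBnot τ hτ), mul_assoc, hyxxy, mul_one]
  have hmul : ∀ σ τ : ↥X, F (σ * τ) = F σ * F τ := by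
    intro σ τ
    apply Subtype.ext
    rw [Subgroup.coe_mul, hFcoe, hFcoe, hFcoe, Subgroup.coe_mul]
    by_cases hσ : (σ : M) ∈ N <;> by_cases hτ : (τ : M) ∈ N
    · rw [if_pos hσ, if_pos hτ, if_pos (N.mul_mem hσ hτ)]
    · have hστ : (σ : M) * (τ : M) ∉ N := by
        intro h
        apply hτ
        have h2 := N.mul_mem (N.inv_mem hσ) h
        rwa [inv_mul_cancel_left] at h2
      rw [if_pos hσ, if_neg hτ, if_neg hστ, mul_assoc]
    · have hστ : (σ : M) * (τ : M) ∉ N := by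
        intro h
        apply hσ
        have h2 := N.mul_mem h (N.inv_mem hτ)
        rwa [mul_inv_cancel_right] at h2
      have hcomm : Commute (x * y) (τ : M) := (hcx _ hτ).mul_left (hcy _ hτ)
      rw [if_neg hσ, if_pos hτ, if_neg hστ, mul_assoc (σ : M) (x * y) (τ : M),
        hcomm.eq, mul_assoc]
    · have hσx : (σ : M) * x ∈ N := (hX σ σ.2).2.2.resolve_left hσ
      have hτx : (τ : M) * x ∈ N := (hX τ τ.2).2.2.resolve_left hτ
      have hcτ : Commute x (τ : M) := (hX τ τ.2).1
      have hστ : (σ : M) * (τ : M) ∈ N := by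
        have key : ((σ : M) * x) * ((τ : M) * x) = (σ : M) * (τ : M) := by
          rw [mul_assoc (σ : M) x ((τ : M) * x), ← mul_assoc x (τ : M) x, hcτ.eq,
            mul_assoc (τ : M) x x, hx2, mul_one]
        rw [← key]
        exact N.mul_mem hσx hτx
      have hcomm : Commute (x * y) (τ : M) := (hX τ τ.2).1.mul_left (hX τ τ.2).2.1
      rw [if_pos hστ, if_neg hσ, if_neg hτ]
      rw [mul_assoc (σ : M) (x * y) ((τ : M) * (x * y)), ← mul_assoc (x * y) (τ : M) (x * y),
        hcomm.eq, mul_assoc (τ : M) (x * y) (x * y), hsq, mul_one]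
  refine ⟨{ toFun := F, invFun := B, left_inv := hleft, right_inv := hright,
            map_mul' := hmul }, ?_, ?_⟩
  · intro g hg
    have hg' : (g : M) ∈ N := hg
    show (F g : M) = g
    rw [hFcoe, if_pos hg']
  · intro g hg
    show (F g : M) = y
    rw [hFcoe, if_neg (by rw [hg]; exact hxN), hg, ← mul_assoc, hx2, one_mul]

end Closure


/-- If `Z(G) = {e, a}` has exactly two elements and `H₁ ≠ H₂` are distinct subgroups
of `G` of index `2` with `Z(H₁) = Z(H₂) = Z(G)`, then `(Aut(G), Inn(G))` is not a
special pair: the maps `x_i` (`i = 1,2`) defined by `x_i(g) = g` for `g ∈ H_i` and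
`x_i(g) = a·g` for `g ∉ H_i` are two distinct automorphisms of `G`, neither inner,
and there is an isomorphism from `⟨Inn(G) ∪ {x₁}⟩` onto `⟨Inn(G) ∪ {x₂}⟩` fixing
`Inn(G)` pointwise and sending `x₁` to `x₂`. -/
theorem not_isSpecialPair_aut_inn {G : Type u} [Group G] (a : G) (ha : a ≠ 1)
    (hZ : (Subgroup.center G : Set G) = {1, a})
    (H₁ H₂ : Subgroup G) (hne : H₁ ≠ H₂)
    (hidx₁ : H₁.index = 2) (hidx₂ : H₂.index = 2)
    (hZH₁ : Subgroup.map H₁.subtype (Subgroup.center ↥H₁) = Subgroup.center G)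
    (hZH₂ : Subgroup.map H₂.subtype (Subgroup.center ↥H₂) = Subgroup.center G) :
    ¬ IsSpecialPair (MulAut G)
        (((MulAut.conj : G →* MulAut G).range : Subgroup (MulAut G)) : Set (MulAut G)) ∧
      ∃ x₁ x₂ : MulAut G,
        (∀ g : G, (g ∈ H₁ → x₁ g = g) ∧ (g ∉ H₁ → x₁ g = a * g)) ∧
        (∀ g : G, (g ∈ H₂ → x₂ g = g) ∧ (g ∉ H₂ → x₂ g = a * g)) ∧
        x₁ ≠ x₂ ∧
        x₁ ∉ (MulAut.conj : G →* MulAut G).range ∧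
        x₂ ∉ (MulAut.conj : G →* MulAut G).range ∧
        FixesAndSends
          (((MulAut.conj : G →* MulAut G).range : Subgroup (MulAut G)) : Set (MulAut G))
          x₁ x₂ := by
  classical
  have hc : a ∈ Subgroup.center G := by
    rw [← SetLike.mem_coe, hZ]; right; rfl
  have ha2 : a * a = 1 := by
    have h1 : a * a ∈ ({1, a} : Set G) := by
      rw [← hZ]; exact mul_mem hc hc
    rcases h1 with h1 | h1
    · exact h1
    · exact absurd (mul_left_cancel (a := a) (by rw [h1, mul_one])) ha
  have haH : ∀ (H : Subgroup G),
      Subgroup.map H.subtype (Subgroup.center H) = Subgroup.center G → a ∈ H := by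
    intro H hmap
    have h1 : a ∈ Subgroup.map H.subtype (Subgroup.center H) := hmap ▸ hc
    obtain ⟨b, -, rfl⟩ := h1
    exact b.2
  have haH₁ : a ∈ H₁ := haH H₁ hZH₁
  have haH₂ : a ∈ H₂ := haH H₂ hZH₂
  set x₁ : MulAut G := autTwo a H₁ hc ha2 haH₁ hidx₁ with hx₁def
  set x₂ : MulAut G := autTwo a H₂ hc ha2 haH₂ hidx₂ with hx₂def
  set N : Subgroup (MulAut G) := (MulAut.conj : G →* MulAut G).range with hNdef
  have hval₁ : ∀ g : G, (g ∈ H₁ → x₁ g = g) ∧ (g ∉ H₁ → x₁ g = a * g) := fun g =>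
    ⟨fun hg => by rw [hx₁def, autTwo_apply, autTwoFun_mem hg],
     fun hg => by rw [hx₁def, autTwo_apply, autTwoFun_not_mem hg]⟩
  have hval₂ : ∀ g : G, (g ∈ H₂ → x₂ g = g) ∧ (g ∉ H₂ → x₂ g = a * g) := fun g =>
    ⟨fun hg => by rw [hx₂def, autTwo_apply, autTwoFun_mem hg],
     fun hg => by rw [hx₂def, autTwo_apply, autTwoFun_not_mem hg]⟩
  have hne12 : x₁ ≠ x₂ := by
    intro h
    apply hne
    ext g
    constructor
    · intro hg
      by_contra hg'
      have e1 : x₁ g = g := (hval₁ g).1 hg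
      have e2 : x₂ g = a * g := (hval₂ g).2 hg'
      rw [h, e2] at e1
      exact ha (mul_eq_right.mp e1)
    · intro hg
      by_contra hg'
      have e1 : x₂ g = g := (hval₂ g).1 hg
      have e2 : x₁ g = a * g := (hval₁ g).2 hg'
      rw [← h, e2] at e1
      exact ha (mul_eq_right.mp e1)
  have hnotinn₁ : x₁ ∉ N := autTwo_not_inner hZH₁ ha
  have hnotinn₂ : x₂ ∉ N := autTwo_not_inner hZH₂ ha
  have hsq₁ : x₁ * x₁ = 1 := autTwo_sq
  have hsq₂ : x₂ * x₂ = 1 := autTwo_sq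
  have hcx : ∀ n ∈ N, Commute x₁ n := by
    rintro n ⟨c, rfl⟩
    exact autTwo_commute_conj c
  have hcy : ∀ n ∈ N, Commute x₂ n := by
    rintro n ⟨c, rfl⟩
    exact autTwo_commute_conj c
  have hm₁ : ∀ g : G, a * g ∈ H₁ ↔ g ∈ H₁ := fun g => by
    rw [Subgroup.mul_mem_iff_of_index_two hidx₁]; tauto
  have hm₂ : ∀ g : G, a * g ∈ H₂ ↔ g ∈ H₂ := fun g => by
    rw [Subgroup.mul_mem_iff_of_index_two hidx₂]; tauto
  have hxy : Commute x₁ x₂ := by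
    ext g
    simp only [MulAut.mul_apply, hx₁def, hx₂def, autTwo_apply]
    by_cases hg1 : g ∈ H₁ <;> by_cases hg2 : g ∈ H₂ <;>
      simp [autTwoFun, hg1, hg2, hm₁ g, hm₂ g]
  have hFS : FixesAndSends (N : Set (MulAut G)) x₁ x₂ :=
    fixesAndSends_aux N x₁ x₂ hsq₁ hsq₂ hcx hcy hxy hnotinn₁ hnotinn₂
  refine ⟨fun h => hne12 (h x₁ x₂ hFS), x₁, x₂, hval₁, hval₂, hne12,
    hnotinn₁, hnotinn₂, hFS⟩
end
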